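/- Let A be the K-algebra generated by g and x subject to relations g^n = 1, x^d = μ(1 − g^d), x·g = q·g·x, where q ∈ K is a root of unity of order d, d divides n, and μ ∈ K. Then the center of A has K-basis {1, g^d, g^{2d}, …, g^{n−d}}. -/

import Mathlib

namespace Stmt5Aux

lemma pow_mod_eq {M : Type*} [Monoid M] {u : M} {n : ℕ} (h : u ^ n = 1) (a : ℕ) :
    u ^ a = u ^ (a % n) := by
  conv_lhs => rw [← Nat.div_add_mod a n, pow_add, pow_mul, h, one_pow, one_mul]

lemma pow_val_natCast {M : Type*} [Monoid M] {u : M} {n : ℕ} (h : u ^ n = 1) (a : ℕ) :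
    u ^ ((a : ZMod n)).val = u ^ a := by
  rw [ZMod.val_natCast, ← pow_mod_eq h]

lemma pow_val_add {M : Type*} [Monoid M] {u : M} {n : ℕ} [NeZero n] (h : u ^ n = 1)
    (i j : ZMod n) : u ^ (i + j).val = u ^ i.val * u ^ j.val := by
  have : i + j = ((i.val + j.val : ℕ) : ZMod n) := by
    push_cast
    simp [ZMod.natCast_val, ZMod.cast_id]
  rw [this, pow_val_natCast h, pow_add]

lemma pow_val_sub_d {M : Type*} [Monoid M] {u : M} {n d : ℕ} [NeZero n] (h : u ^ n = 1)
    (hd : u ^ d = 1) (i : ZMod n) : u ^ (i - (d : ZMod n)).val = u ^ i.val := by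
  have := pow_val_add h (i - (d : ZMod n)) (d : ZMod n)
  simp only [sub_add_cancel] at this
  rw [this, pow_val_natCast h, hd, mul_one]

lemma val_sub_one {d : ℕ} [NeZero d] {j : ZMod d} (hj : j ≠ 0) :
    (j - 1).val = j.val - 1 := by
  have h1 : 1 ≤ j.val := Nat.one_le_iff_ne_zero.2 (by simpa [ZMod.val_eq_zero] using hj)
  have h2 : j.val - 1 < d := lt_of_le_of_lt (Nat.sub_le _ _) (ZMod.val_lt j)
  have : j - 1 = ((j.val - 1 : ℕ) : ZMod d) := by
    rw [Nat.cast_sub h1, Nat.cast_one, ZMod.natCast_val, ZMod.cast_id]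
  rw [this, ZMod.val_cast_of_lt h2]

lemma val_neg_one' {d : ℕ} [NeZero d] : (-1 : ZMod d).val = d - 1 := by
  have hd : 1 ≤ d := Nat.one_le_iff_ne_zero.2 (NeZero.ne d)
  have : (-1 : ZMod d) = ((d - 1 : ℕ) : ZMod d) := by
    push_cast [Nat.cast_sub hd]
    simp
  rw [this, ZMod.val_cast_of_lt (by omega)]

variable {K : Type*} [Field K] (n d : ℕ) (mu q : K)

noncomputable def Gop : Module.End K ((ZMod n × ZMod d) → K) where
  toFun f := fun p => f (p.1 - 1, p.2)
  map_add' _ _ := rfl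
  map_smul' _ _ := rfl

noncomputable def Xop : Module.End K ((ZMod n × ZMod d) → K) where
  toFun f := fun p => (q ^ p.1.val) *
    (if p.2 = 0 then mu * (f (p.1, p.2 - 1) - f (p.1 - (d : ZMod n), p.2 - 1))
     else f (p.1, p.2 - 1))
  map_add' f g := by
    funext p
    by_cases h : p.2 = 0 <;> simp [h] <;> ring
  map_smul' c f := by
    funext p
    by_cases h : p.2 = 0 <;> simp [h] <;> ring

@[simp] lemma Gop_apply (f : (ZMod n × ZMod d) → K) (p) :
    Gop n d f p = f (p.1 - 1, p.2) := rfl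

@[simp] lemma Xop_apply (f : (ZMod n × ZMod d) → K) (p) :
    Xop n d mu q f p = (q ^ p.1.val) *
    (if p.2 = 0 then mu * (f (p.1, p.2 - 1) - f (p.1 - (d : ZMod n), p.2 - 1))
     else f (p.1, p.2 - 1)) := rfl

lemma Gop_pow (k : ℕ) (f : (ZMod n × ZMod d) → K) (p) :
    ((Gop n d (K := K)) ^ k) f p = f (p.1 - k, p.2) := by
  induction k generalizing p with
  | zero => simp
  | succ k ih =>
    rw [pow_succ', Module.End.mul_apply, Gop_apply, ih]
    push_cast
    ring_nf

variable [NeZero n] [NeZero d]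

lemma Gop_pow_n : (Gop n d (K := K)) ^ n = 1 := by
  refine LinearMap.ext fun f => funext fun p => ?_
  show ((Gop n d (K := K)) ^ n) f p = f p
  rw [Gop_pow]
  simp

lemma Xop_pow (hqn : q ^ n = 1) (hqd : q ^ d = 1) :
    ∀ k, k ≤ d → ∀ (f : (ZMod n × ZMod d) → K) (p : ZMod n × ZMod d),
    ((Xop n d mu q) ^ k) f p = (q ^ p.1.val) ^ k *
      (if p.2.val < k then
        mu * (f (p.1, p.2 - (k : ZMod d)) - f (p.1 - (d : ZMod n), p.2 - (k : ZMod d)))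
       else f (p.1, p.2 - (k : ZMod d))) := by
  intro k
  induction k with
  | zero => intro _ f p; simp
  | succ k ih =>
    intro hk f p
    have hk' : k ≤ d := Nat.le_of_succ_le hk
    rw [pow_succ', Module.End.mul_apply, Xop_apply]
    by_cases h0 : p.2 = 0
    · -- wrap-around case
      have hval : (p.2 - 1).val = d - 1 := by
        rw [h0, zero_sub]
        exact val_neg_one'
      rw [if_pos h0, ih hk' f (p.1, p.2 - 1), ih hk' f (p.1 - (d : ZMod n), p.2 - 1)]
      simp only
      have hcond : ¬ ((p.2 - 1).val < k) := by
        rw [hval]; omega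
      rw [if_neg hcond, if_neg hcond]
      have hq : (q ^ (p.1 - (d : ZMod n)).val) = q ^ p.1.val :=
        pow_val_sub_d hqn hqd p.1
      have hpt : p.2 - 1 - (k : ZMod d) = p.2 - ((k : ℕ) + 1 : ℕ) := by
        push_cast; ring
      have hcond2 : p.2.val < k + 1 := by
        rw [h0, ZMod.val_zero]; omega
      rw [if_pos hcond2, hq, hpt]
      ring
    · -- no wrap
      have hval : (p.2 - 1).val = p.2.val - 1 := val_sub_one h0
      have h1 : 1 ≤ p.2.val := Nat.one_le_iff_ne_zero.2 (by simpa [ZMod.val_eq_zero] using h0)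
      rw [if_neg h0, ih hk' f (p.1, p.2 - 1)]
      simp only
      have hpt : p.2 - 1 - (k : ZMod d) = p.2 - ((k : ℕ) + 1 : ℕ) := by
        push_cast; ring
      by_cases hc : (p.2 - 1).val < k
      · have hc2 : p.2.val < k + 1 := by rw [hval] at hc; omega
        rw [if_pos hc, if_pos hc2, hpt]
        ring
      · have hc2 : ¬ (p.2.val < k + 1) := by rw [hval] at hc; omega
        rw [if_neg hc, if_neg hc2, hpt]
        ring

lemma Xop_pow_d (hn : 0 < n) (hdpos : 0 < d) (hqn : q ^ n = 1) (hqd : q ^ d = 1) :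
    (Xop n d mu q) ^ d = mu • (1 - (Gop n d (K := K)) ^ d) := by
  refine LinearMap.ext fun f => funext fun p => ?_
  rw [Xop_pow n d mu q hqn hqd d le_rfl]
  have h1 : (d : ZMod d) = 0 := ZMod.natCast_self d
  have h2 : (q ^ p.1.val) ^ d = 1 := by
    rw [← pow_mul, mul_comm, pow_mul, hqd, one_pow]
  rw [if_pos (ZMod.val_lt p.2), h1, h2, sub_zero, one_mul]
  simp only [LinearMap.smul_apply, LinearMap.sub_apply, Module.End.one_apply, Pi.smul_apply,
    Pi.sub_apply, smul_eq_mul]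
  rw [Gop_pow]

lemma Xop_Gop (hqn : q ^ n = 1) :
    (Xop n d mu q) * (Gop n d) = q • ((Gop n d) * (Xop n d mu q)) := by
  refine LinearMap.ext fun f => funext fun p => ?_
  simp only [Module.End.mul_apply, LinearMap.smul_apply, Pi.smul_apply, smul_eq_mul,
    Xop_apply, Gop_apply]
  have hq : q * q ^ (p.1 - 1).val = q ^ p.1.val := by
    have := pow_val_add hqn (p.1 - 1) 1
    simp only [sub_add_cancel] at this
    have h1 : q ^ ((1 : ZMod n)).val = q := by
      rw [show (1 : ZMod n) = ((1 : ℕ) : ZMod n) by push_cast; rfl, pow_val_natCast hqn, pow_one]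
    rw [this, h1]; ring
  have hpt : p.1 - (d : ZMod n) - 1 = p.1 - 1 - (d : ZMod n) := by ring
  by_cases h0 : p.2 = 0
  · rw [if_pos h0, if_pos h0, hpt, ← hq]; ring
  · rw [if_neg h0, if_neg h0, ← hq]; ring


end Stmt5Aux

open FreeAlgebra in
/-- Relations of the algebra `A(n, d, μ, q)`: `g^n = 1`, `x^d = μ(1 - g^d)`, `xg = q·gx`,
where `g` and `x` are the generators indexed by `false` and `true`. -/
inductive ARel (K : Type*) [Field K] (n d : ℕ) (mu q : K) :
    FreeAlgebra K Bool → FreeAlgebra K Bool → Prop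
  | g : ARel K n d mu q (ι K false ^ n) 1
  | x : ARel K n d mu q (ι K true ^ d) (mu • (1 - ι K false ^ d))
  | comm : ARel K n d mu q (ι K true * ι K false) (q • (ι K false * ι K true))

/-- The algebra `A(n, d, μ, q)`. -/
abbrev AAlg (K : Type*) [Field K] (n d : ℕ) (mu q : K) := RingQuot (ARel K n d mu q)

/-- The generator `g` of `A(n, d, μ, q)`. -/
noncomputable def Agen (K : Type*) [Field K] (n d : ℕ) (mu q : K) : AAlg K n d mu q :=
  RingQuot.mkAlgHom K (ARel K n d mu q) (FreeAlgebra.ι K false)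

/-- The generator `x` of `A(n, d, μ, q)`. -/
noncomputable def Axgen (K : Type*) [Field K] (n d : ℕ) (mu q : K) : AAlg K n d mu q :=
  RingQuot.mkAlgHom K (ARel K n d mu q) (FreeAlgebra.ι K true)

namespace Stmt5Aux

section Main

variable {K : Type*} [Field K] (n d : ℕ) (mu q : K)

local notation "g" => Agen K n d mu q
local notation "x" => Axgen K n d mu q

lemma Agen_pow_n : g ^ n = 1 := by
  rw [Agen, ← map_pow]
  exact (RingQuot.mkAlgHom_rel K ARel.g).trans (map_one _)

lemma Axgen_pow_d : x ^ d = mu • (1 - g ^ d) := by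
  rw [Axgen, ← map_pow]
  refine (RingQuot.mkAlgHom_rel K ARel.x).trans ?_
  rw [map_smul, map_sub, map_one, map_pow]
  rfl

lemma Axgen_Agen : x * g = q • (g * x) := by
  rw [Axgen, Agen, ← map_mul]
  refine (RingQuot.mkAlgHom_rel K ARel.comm).trans ?_
  rw [map_smul, map_mul]

lemma Axgen_Agen_pow (a : ℕ) : x * g ^ a = (q ^ a) • (g ^ a * x) := by
  induction a with
  | zero => simp
  | succ a ih =>
    rw [pow_succ', ← mul_assoc, Axgen_Agen, smul_mul_assoc, mul_assoc, ih]
    rw [mul_smul_comm, smul_smul, pow_succ', ← mul_assoc]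

lemma Axgen_pow_Agen_pow (a b : ℕ) :
    x ^ b * g ^ a = (q ^ (a * b)) • (g ^ a * x ^ b) := by
  induction b with
  | zero => simp
  | succ b ih =>
    rw [pow_succ (Axgen K n d mu q), mul_assoc, Axgen_Agen_pow, mul_smul_comm, ← mul_assoc, ih,
      smul_mul_assoc, smul_smul, mul_assoc, ← pow_succ, ← pow_add]
    ring_nf

variable [NeZero n] [NeZero d]

/-- The regular representation of `A(n,d,mu,q)`. -/
noncomputable def rho (hn : 0 < n) (hdpos : 0 < d) (hqd : q ^ d = 1) (hdvd : d ∣ n) :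
    AAlg K n d mu q →ₐ[K] Module.End K ((ZMod n × ZMod d) → K) :=
  RingQuot.liftAlgHom K ⟨FreeAlgebra.lift K (fun b => if b then Xop n d mu q else Gop n d),
    by
      have hqn : q ^ n = 1 := by
        obtain ⟨c, rfl⟩ := hdvd
        rw [pow_mul, hqd, one_pow]
      rintro _ _ ⟨⟩
      · rw [map_pow, map_one, FreeAlgebra.lift_ι_apply]
        simpa using Gop_pow_n n d
      · rw [map_pow, map_smul, map_sub, map_one, map_pow, FreeAlgebra.lift_ι_apply,
          FreeAlgebra.lift_ι_apply]
        simpa using Xop_pow_d n d mu q hn hdpos hqn hqd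
      · rw [map_mul, map_smul, map_mul, FreeAlgebra.lift_ι_apply, FreeAlgebra.lift_ι_apply]
        simpa using Xop_Gop n d mu q hqn⟩

variable (hn : 0 < n) (hdpos : 0 < d) (hqd : q ^ d = 1) (hdvd : d ∣ n)

lemma rho_Agen : rho n d mu q hn hdpos hqd hdvd (Agen K n d mu q) = Gop n d := by
  rw [Agen, rho, RingQuot.liftAlgHom_mkAlgHom_apply, FreeAlgebra.lift_ι_apply]
  simp

lemma rho_Axgen : rho n d mu q hn hdpos hqd hdvd (Axgen K n d mu q) = Xop n d mu q := by
  rw [Axgen, rho, RingQuot.liftAlgHom_mkAlgHom_apply, FreeAlgebra.lift_ι_apply]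
  simp

/-- The monomial family `g^i x^j`. -/
noncomputable def mon (p : ZMod n × ZMod d) : AAlg K n d mu q :=
  Agen K n d mu q ^ p.1.val * Axgen K n d mu q ^ p.2.val

/-- The coordinate map: apply `rho` to the delta function at `(0,0)`. -/
noncomputable def phi : AAlg K n d mu q →ₗ[K] ((ZMod n × ZMod d) → K) :=
  (LinearMap.applyₗ (Pi.single ((0 : ZMod n), (0 : ZMod d)) (1 : K))).comp
    (rho n d mu q hn hdpos hqd hdvd).toLinearMap

lemma phi_apply (a : AAlg K n d mu q) :
    phi n d mu q hn hdpos hqd hdvd a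
      = rho n d mu q hn hdpos hqd hdvd a (Pi.single ((0 : ZMod n), (0 : ZMod d)) (1 : K)) := rfl

lemma phi_mon (p : ZMod n × ZMod d) :
    phi n d mu q hn hdpos hqd hdvd (mon n d mu q p) = Pi.single p 1 := by
  have hqn : q ^ n = 1 := by
    obtain ⟨c, rfl⟩ := hdvd
    rw [pow_mul, hqd, one_pow]
  rw [phi_apply, mon, map_mul, map_pow, map_pow, rho_Agen, rho_Axgen]
  funext pt
  rw [Module.End.mul_apply, Gop_pow]
  rw [Xop_pow n d mu q hqn hqd p.2.val (le_of_lt (ZMod.val_lt p.2))]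
  have e0 : ∀ r : ZMod n × ZMod d,
      Pi.single (M := fun _ : ZMod n × ZMod d => K) ((0 : ZMod n), (0 : ZMod d)) 1 r
        = if r = ((0 : ZMod n), (0 : ZMod d)) then (1 : K) else 0 := by
    intro r
    rw [Pi.single_apply]
  simp only [e0]
  have hcast1 : ((p.1.val : ℕ) : ZMod n) = p.1 := by
    rw [ZMod.natCast_val, ZMod.cast_id]
  have hcast2 : ((p.2.val : ℕ) : ZMod d) = p.2 := by
    rw [ZMod.natCast_val, ZMod.cast_id]
  have target : Pi.single (M := fun _ : ZMod n × ZMod d => K) p 1 pt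
      = if pt = p then (1 : K) else 0 := by
    rw [Pi.single_apply]
  rw [target]
  have hsub2 : ∀ y : ZMod d, (pt.2 - (p.2.val : ZMod d) = 0) ↔ pt.2 = p.2 := by
    intro _; rw [sub_eq_zero, hcast2]
  by_cases hlt : pt.2.val < p.2.val
  · have hne2 : pt.2 ≠ p.2 := fun h => by rw [h] at hlt; omega
    have hz : ¬ (pt.2 - (p.2.val : ZMod d) = 0) := fun h => hne2 ((hsub2 pt.2).1 h)
    rw [if_pos hlt]
    rw [if_neg (by simp only [Prod.mk.injEq, not_and]; exact fun _ => hz),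
        if_neg (by simp only [Prod.mk.injEq, not_and]; exact fun _ => hz),
        if_neg (fun h : pt = p => hne2 (by rw [h]))]
    ring
  · rw [if_neg hlt]
    by_cases hpt : pt = p
    · subst hpt
      have hz1 : pt.1 - (pt.1.val : ZMod n) = 0 := by rw [hcast1, sub_self]
      have hz2 : pt.2 - (pt.2.val : ZMod d) = 0 := by rw [hcast2, sub_self]
      rw [if_pos (by rw [hz1, hz2]), if_pos rfl, hz1]
      simp
    · have : ¬ ((pt.1 - (p.1.val : ZMod n), pt.2 - (p.2.val : ZMod d))
          = ((0 : ZMod n), (0 : ZMod d))) := by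
        simp only [Prod.mk.injEq, not_and]
        intro h1 h2
        exact hpt (Prod.ext (by rwa [sub_eq_zero, hcast1] at h1) ((hsub2 pt.2).1 h2))
      rw [if_neg this, if_neg hpt]
      ring


section Span

/-- The span of the monomials `g^i x^j`. -/
noncomputable def monSpan : Submodule K (AAlg K n d mu q) :=
  Submodule.span K (Set.range (mon n d mu q))

lemma mon_mem_span (a b : ℕ) (hb : b < d) : g ^ a * x ^ b ∈ monSpan n d mu q := by
  have hga : g ^ a = g ^ (((a : ZMod n)).val) := (pow_val_natCast (Agen_pow_n n d mu q) a).symm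
  have hxb : x ^ b = x ^ (((b : ZMod d)).val) := by
    rw [ZMod.val_natCast, Nat.mod_eq_of_lt hb]
  rw [hga, hxb]
  exact Submodule.subset_span ⟨((a : ZMod n), (b : ZMod d)), rfl⟩

lemma gx_mem_span (hdpos : 0 < d) : ∀ b a : ℕ, g ^ a * x ^ b ∈ monSpan n d mu q := by
  intro b
  induction b using Nat.strong_induction_on with
  | _ b ih =>
    intro a
    by_cases hb : b < d
    · exact mon_mem_span n d mu q a b hb
    · push_neg at hb
      have hx : x ^ b = mu • (x ^ (b - d)) - mu • (g ^ d * x ^ (b - d)) := by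
        have : x ^ b = x ^ d * x ^ (b - d) := by rw [← pow_add, Nat.add_sub_cancel' hb]
        rw [this, Axgen_pow_d, smul_mul_assoc, sub_mul, one_mul, smul_sub]
      rw [hx, mul_sub, mul_smul_comm, mul_smul_comm, ← mul_assoc, ← pow_add]
      have h1 := ih (b - d) (by omega) a
      have h2 := ih (b - d) (by omega) (a + d)
      exact Submodule.sub_mem _ (Submodule.smul_mem _ _ h1) (Submodule.smul_mem _ _ h2)

lemma mon_mul_mon (p p' : ZMod n × ZMod d) :
    mon n d mu q p * mon n d mu q p'
      = (q ^ (p'.1.val * p.2.val)) • (g ^ (p.1.val + p'.1.val) * x ^ (p.2.val + p'.2.val)) := by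
  rw [mon, mon, mul_assoc, ← mul_assoc (Axgen K n d mu q ^ p.2.val),
    Axgen_pow_Agen_pow, smul_mul_assoc, mul_smul_comm]
  rw [pow_add, pow_add]
  congr 1
  simp only [mul_assoc]

lemma monSpan_mul_mem (hdpos : 0 < d) {a b : AAlg K n d mu q}
    (ha : a ∈ monSpan n d mu q) (hb : b ∈ monSpan n d mu q) :
    a * b ∈ monSpan n d mu q := by
  induction hb using Submodule.span_induction with
  | mem y hy =>
    induction ha using Submodule.span_induction with
    | mem z hz =>
      obtain ⟨p, rfl⟩ := hz
      obtain ⟨p', rfl⟩ := hy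
      rw [mon_mul_mon]
      exact Submodule.smul_mem _ _ (gx_mem_span n d mu q hdpos _ _)
    | zero => rw [zero_mul]; exact Submodule.zero_mem _
    | add z w _ _ hz hw => rw [add_mul]; exact Submodule.add_mem _ hz hw
    | smul c z _ hz => rw [smul_mul_assoc]; exact Submodule.smul_mem _ _ hz
  | zero => rw [mul_zero]; exact Submodule.zero_mem _
  | add y z _ _ hy hz => rw [mul_add]; exact Submodule.add_mem _ hy hz
  | smul c y _ hy => rw [mul_smul_comm]; exact Submodule.smul_mem _ _ hy

lemma one_mem_monSpan (hdpos : 0 < d) : (1 : AAlg K n d mu q) ∈ monSpan n d mu q := by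
  have := mon_mem_span n d mu q 0 0 hdpos
  simpa using this

lemma top_eq_adjoin : (⊤ : Subalgebra K (AAlg K n d mu q)) = Algebra.adjoin K {g, x} := by
  have himg : (⇑(RingQuot.mkAlgHom K (ARel K n d mu q)) '' Set.range (FreeAlgebra.ι K))
      = {g, x} := by
    ext a
    simp only [Set.mem_image, Set.mem_range, Set.mem_insert_iff, Set.mem_singleton_iff]
    constructor
    · rintro ⟨_, ⟨b, rfl⟩, rfl⟩
      cases b
      · left; rfl
      · right; rfl
    · rintro (rfl | rfl)
      · exact ⟨FreeAlgebra.ι K false, ⟨false, rfl⟩, rfl⟩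
      · exact ⟨FreeAlgebra.ι K true, ⟨true, rfl⟩, rfl⟩
  rw [← himg, ← AlgHom.map_adjoin (RingQuot.mkAlgHom K (ARel K n d mu q)), FreeAlgebra.adjoin_range_ι K Bool]
  ext a
  simp only [Algebra.mem_top, true_iff, Subalgebra.mem_map]
  obtain ⟨b, rfl⟩ := RingQuot.mkAlgHom_surjective K (ARel K n d mu q) a
  exact ⟨b, by simp, rfl⟩

lemma monSpan_eq_top (hd2 : 1 < d) : monSpan n d mu q = ⊤ := by
  have hdpos : 0 < d := by omega
  refine le_antisymm le_top ?_
  intro a hmem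
  clear hmem
  have ha : a ∈ Algebra.adjoin K ({g, x} : Set (AAlg K n d mu q)) := by
    rw [← top_eq_adjoin (K := K) n d mu q]
    exact Algebra.mem_top
  induction ha using Algebra.adjoin_induction with
  | mem z hz =>
    rcases hz with rfl | rfl
    · have := mon_mem_span n d mu q 1 0 hdpos
      simpa using this
    · have := mon_mem_span n d mu q 0 1 hd2
      simpa using this
  | algebraMap r =>
    rw [Algebra.algebraMap_eq_smul_one]
    exact Submodule.smul_mem _ _ (one_mem_monSpan n d mu q hdpos)
  | add y z _ _ hy hz => exact Submodule.add_mem _ hy hz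
  | mul y z _ _ hy hz => exact monSpan_mul_mem n d mu q hdpos hy hz

end Span


section BasisA

/-- The monomial basis of `A`. -/
noncomputable def BA (hn : 0 < n) (hd2 : 1 < d) (hqd : q ^ d = 1) (hdvd : d ∣ n) :
    Module.Basis (ZMod n × ZMod d) K (AAlg K n d mu q) :=
  Module.Basis.mk (v := mon n d mu q)
    (by
      have hdpos : 0 < d := Nat.zero_lt_of_lt hd2
      apply LinearIndependent.of_comp (phi n d mu q hn hdpos hqd hdvd)
      have hfun : (⇑(phi n d mu q hn hdpos hqd hdvd) ∘ mon n d mu q)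
          = fun p => Pi.single p (1 : K) :=
        funext fun p => phi_mon n d mu q hn hdpos hqd hdvd p
      rw [hfun]
      have hb := (Pi.basisFun K (ZMod n × ZMod d)).linearIndependent
      have : ⇑(Pi.basisFun K (ZMod n × ZMod d)) = fun p => Pi.single p (1 : K) :=
        funext fun p => Pi.basisFun_apply K _ p
      rwa [this] at hb)
    (by rw [show Submodule.span K (Set.range (mon n d mu q)) = monSpan n d mu q from rfl,
          monSpan_eq_top n d mu q hd2])

lemma Agen_pow_val_succ (i : ZMod n) :
    Agen K n d mu q ^ ((i + 1 : ZMod n)).val = Agen K n d mu q ^ i.val * Agen K n d mu q := by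
  rw [pow_val_add (Agen_pow_n n d mu q) i 1,
    show (1 : ZMod n) = ((1 : ℕ) : ZMod n) by rw [Nat.cast_one],
    pow_val_natCast (Agen_pow_n n d mu q), pow_one]

lemma mon_mul_g (p : ZMod n × ZMod d) :
    mon n d mu q p * Agen K n d mu q = (q ^ p.2.val) • mon n d mu q (p.1 + 1, p.2) := by
  have hswap : Axgen K n d mu q ^ p.2.val * Agen K n d mu q
      = (q ^ p.2.val) • (Agen K n d mu q * Axgen K n d mu q ^ p.2.val) := by
    simpa using Axgen_pow_Agen_pow n d mu q 1 p.2.val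
  rw [mon, mon, mul_assoc, hswap]
  simp only
  rw [Agen_pow_val_succ, mul_smul_comm]
  congr 1
  rw [mul_assoc]

lemma g_mul_mon (p : ZMod n × ZMod d) :
    Agen K n d mu q * mon n d mu q p = mon n d mu q (p.1 + 1, p.2) := by
  rw [mon, mon]
  simp only
  rw [Agen_pow_val_succ, ← mul_assoc, ← pow_succ', ← pow_succ]

lemma val_one' (hd2 : 1 < d) : ((1 : ZMod d)).val = 1 := by
  rw [show (1 : ZMod d) = ((1 : ℕ) : ZMod d) by rw [Nat.cast_one], ZMod.val_cast_of_lt hd2]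

lemma mon_mul_x (hd2 : 1 < d) (i : ZMod n) :
    mon n d mu q (i, (0 : ZMod d)) * Axgen K n d mu q = mon n d mu q (i, 1) := by
  rw [mon, mon]
  simp only [ZMod.val_zero, pow_zero, mul_one, val_one' d hd2, pow_one]

lemma x_mul_mon (hd2 : 1 < d) (i : ZMod n) :
    Axgen K n d mu q * mon n d mu q (i, (0 : ZMod d))
      = (q ^ i.val) • mon n d mu q (i, 1) := by
  rw [mon, mon]
  simp only [ZMod.val_zero, pow_zero, mul_one, val_one' d hd2, pow_one]
  exact Axgen_Agen_pow n d mu q i.val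

end BasisA


section Center

lemma q_pow_eq_one_iff (hdpos : 0 < d) (hqd : q ^ d = 1)
    (h2 : ∀ k : ℕ, 0 < k → k < d → q ^ k ≠ 1)
    (k : ℕ) (hk : q ^ k = 1) : d ∣ k := by
  rw [pow_mod_eq hqd k] at hk
  rcases Nat.eq_zero_or_pos (k % d) with h | h
  · exact Nat.dvd_of_mod_eq_zero h
  · exact absurd hk (h2 _ h (Nat.mod_lt _ hdpos))

lemma Agen_pow_d_central (hqd : q ^ d = 1) :
    Agen K n d mu q ^ d ∈ Subalgebra.center K (AAlg K n d mu q) := by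
  rw [Subalgebra.mem_center_iff]
  intro b
  have hb : b ∈ (⊤ : Subalgebra K (AAlg K n d mu q)) := Algebra.mem_top
  rw [top_eq_adjoin (K := K) n d mu q] at hb
  induction hb using Algebra.adjoin_induction with
  | mem z hz =>
    rcases hz with rfl | rfl
    · rw [← pow_succ, ← pow_succ']
    · have := Axgen_Agen_pow n d mu q d
      rw [this, hqd, one_smul]
  | algebraMap r => rw [Algebra.commutes]
  | add y z _ _ hy hz => rw [add_mul, mul_add, hy, hz]
  | mul y z _ _ hy hz => rw [mul_assoc, hz, ← mul_assoc, hy, mul_assoc]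

variable [NeZero n] [NeZero d]

lemma central_mem_span (hn : 0 < n) (hd2 : 1 < d) (hqd : q ^ d = 1) (hdvd : d ∣ n)
    (h2 : ∀ k : ℕ, 0 < k → k < d → q ^ k ≠ 1)
    {z : AAlg K n d mu q} (hz : z ∈ Subalgebra.center K (AAlg K n d mu q)) :
    z ∈ Submodule.span K
      (Set.range (fun k : Fin (n / d) => Agen K n d mu q ^ (d * (k : ℕ)))) := by
  have hdpos : 0 < d := by omega
  set B := BA n d mu q hn hd2 hqd hdvd with hB
  have hBmon : ∀ p, B p = mon n d mu q p := fun p => Module.Basis.mk_apply _ _ p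
  set c : (ZMod n × ZMod d) → K := fun p => B.repr z p with hc
  have hrepr : ∑ p : ZMod n × ZMod d, c p • mon n d mu q p = z := by
    conv_rhs => rw [← B.sum_repr z]
    exact Finset.sum_congr rfl fun p _ => by rw [hBmon p]
  have hcomm := Subalgebra.mem_center_iff.mp hz
  -- mon is linearly independent
  have hmonli : LinearIndependent K (mon n d mu q) := by
    have := B.linearIndependent
    rwa [show ⇑B = mon n d mu q from funext hBmon] at this
  -- Step 1: coefficients with j ≠ 0 vanish
  have step1 : ∀ p : ZMod n × ZMod d, p.2 ≠ 0 → c p = 0 := by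
    have hzg : z * Agen K n d mu q - Agen K n d mu q * z = 0 := by
      rw [hcomm (Agen K n d mu q)]; exact sub_self _
    have hsum : ∑ p : ZMod n × ZMod d,
        (c p * q ^ p.2.val - c p) • mon n d mu q (p.1 + 1, p.2) = 0 := by
      have e1 : z * Agen K n d mu q
          = ∑ p : ZMod n × ZMod d, (c p * q ^ p.2.val) • mon n d mu q (p.1 + 1, p.2) := by
        rw [← hrepr, Finset.sum_mul]
        exact Finset.sum_congr rfl fun p _ => by
          rw [smul_mul_assoc, mon_mul_g, smul_smul]
      have e2 : Agen K n d mu q * z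
          = ∑ p : ZMod n × ZMod d, c p • mon n d mu q (p.1 + 1, p.2) := by
        rw [← hrepr, Finset.mul_sum]
        exact Finset.sum_congr rfl fun p _ => by
          rw [mul_smul_comm, g_mul_mon]
      rw [← hzg, e1, e2, ← Finset.sum_sub_distrib]
      exact Finset.sum_congr rfl fun p _ =>
        sub_smul (c p * q ^ p.2.val) (c p) (mon n d mu q (p.1 + 1, p.2))
    have hli : LinearIndependent K
        (fun p : ZMod n × ZMod d => mon n d mu q (p.1 + 1, p.2)) := by
      have hinj : Function.Injective
          (fun p : ZMod n × ZMod d => ((p.1 + 1 : ZMod n), p.2)) := by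
        intro a b h
        simp only [Prod.mk.injEq] at h
        exact Prod.ext (by linear_combination h.1) h.2
      exact hmonli.comp _ hinj
    intro p hp
    have := Fintype.linearIndependent_iff.mp hli _ hsum p
    have hq1 : q ^ p.2.val ≠ 1 := by
      apply h2 p.2.val
      · exact Nat.pos_of_ne_zero (fun h => hp (by rwa [← ZMod.val_eq_zero]))
      · exact ZMod.val_lt p.2
    have : c p * (q ^ p.2.val - 1) = 0 := by linear_combination this
    rcases mul_eq_zero.mp this with h | h
    · exact h
    · exact absurd (by linear_combination h) hq1
  -- Step 2: z is a combination of the mon (i, 0)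
  have step2 : z = ∑ i : ZMod n, c (i, 0) • mon n d mu q (i, 0) := by
    rw [← hrepr, Fintype.sum_prod_type]
    exact Finset.sum_congr rfl fun i _ =>
      Finset.sum_eq_single 0 (fun j _ hj => by rw [step1 (i, j) hj, zero_smul])
        (fun h => absurd (Finset.mem_univ _) h)
  -- Step 3: coefficients with ¬ d ∣ i.val vanish
  have step3 : ∀ i : ZMod n, ¬ (d ∣ i.val) → c (i, 0) = 0 := by
    have hzx : z * Axgen K n d mu q - Axgen K n d mu q * z = 0 := by
      rw [hcomm (Axgen K n d mu q)]; exact sub_self _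
    have hsum : ∑ i : ZMod n,
        (c (i, 0) - c (i, 0) * q ^ i.val) • mon n d mu q (i, 1) = 0 := by
      have e1 : z * Axgen K n d mu q = ∑ i : ZMod n, c (i, 0) • mon n d mu q (i, 1) := by
        conv_lhs => rw [step2, Finset.sum_mul]
        exact Finset.sum_congr rfl fun i _ => by
          rw [smul_mul_assoc, mon_mul_x n d mu q hd2]
      have e2 : Axgen K n d mu q * z
          = ∑ i : ZMod n, (c (i, 0) * q ^ i.val) • mon n d mu q (i, 1) := by
        conv_lhs => rw [step2, Finset.mul_sum]
        exact Finset.sum_congr rfl fun i _ => by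
          rw [mul_smul_comm, x_mul_mon n d mu q hd2, smul_smul, mul_comm (c (i, 0))]
      rw [← hzx, e1, e2, ← Finset.sum_sub_distrib]
      exact Finset.sum_congr rfl fun i _ =>
        sub_smul (c (i, 0)) (c (i, 0) * q ^ i.val) (mon n d mu q (i, 1))
    have hli : LinearIndependent K (fun i : ZMod n => mon n d mu q (i, 1)) := by
      have hinj : Function.Injective (fun i : ZMod n => (i, (1 : ZMod d))) := by
        intro a b h
        simpa using congrArg Prod.fst h
      exact hmonli.comp _ hinj
    intro i hi
    have := Fintype.linearIndependent_iff.mp hli _ hsum i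
    have hq1 : q ^ i.val ≠ 1 := fun h =>
      hi (q_pow_eq_one_iff d q hdpos hqd h2 i.val h)
    have : c (i, 0) * (1 - q ^ i.val) = 0 := by linear_combination this
    rcases mul_eq_zero.mp this with h | h
    · exact h
    · exact absurd (by linear_combination -h) hq1
  -- Step 4: conclude membership
  let e : Fin (n / d) → ZMod n := fun k => ((d * (k : ℕ) : ℕ) : ZMod n)
  have hdk : ∀ k : Fin (n / d), d * (k : ℕ) < n := by
    intro k
    have h1 : d * (k : ℕ) < d * (n / d) := mul_lt_mul_of_pos_left k.isLt hdpos
    rwa [Nat.mul_div_cancel' hdvd] at h1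
  have heval : ∀ k : Fin (n / d), (e k).val = d * (k : ℕ) := fun k =>
    ZMod.val_cast_of_lt (hdk k)
  have himage : ∀ i : ZMod n, i ∈ Finset.image e Finset.univ ↔ d ∣ i.val := by
    intro i
    constructor
    · intro hi
      obtain ⟨k, _, rfl⟩ := Finset.mem_image.mp hi
      rw [heval]
      exact Dvd.intro _ rfl
    · intro hi
      obtain ⟨k, hk⟩ := hi
      have hklt : k < n / d := by
        by_contra hge
        push_neg at hge
        have hmul : d * (n / d) ≤ d * k := Nat.mul_le_mul_left d hge
        rw [Nat.mul_div_cancel' hdvd] at hmul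
        have hvl := ZMod.val_lt i
        omega
      refine Finset.mem_image.mpr ⟨⟨k, hklt⟩, Finset.mem_univ _, ?_⟩
      show ((d * k : ℕ) : ZMod n) = i
      rw [← hk, ZMod.natCast_val, ZMod.cast_id]
  have step4 : z = ∑ k : Fin (n / d), c (e k, 0) • mon n d mu q (e k, 0) := by
    have hinj : ∀ k ∈ Finset.univ, ∀ k' ∈ Finset.univ, e k = e k' → k = k' :=
      fun k _ k' _ h => by
        have hv := congrArg ZMod.val h
        rw [heval, heval] at hv
        exact Fin.ext (Nat.eq_of_mul_eq_mul_left hdpos hv)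
    set F : ZMod n → AAlg K n d mu q := fun i => c (i, 0) • mon n d mu q (i, 0) with hF
    have himg2 : ∑ k : Fin (n / d), F (e k) = ∑ i ∈ Finset.image e Finset.univ, F i :=
      (Finset.sum_image hinj).symm
    show z = ∑ k : Fin (n / d), F (e k)
    rw [step2, himg2]
    symm
    apply Finset.sum_subset (Finset.subset_univ _)
    intro i _ hi
    show F i = 0
    rw [hF]
    simp only
    rw [step3 i (fun h => hi ((himage i).mpr h)), zero_smul]
  have hmon_e : ∀ k : Fin (n / d), mon n d mu q (e k, 0)
      = Agen K n d mu q ^ (d * (k : ℕ)) := by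
    intro k
    rw [mon]
    simp only [ZMod.val_zero, pow_zero, mul_one, heval]
  rw [step4]
  apply Submodule.sum_mem
  intro k _
  rw [hmon_e]
  exact Submodule.smul_mem _ _ (Submodule.subset_span ⟨k, rfl⟩)

end Center


section Assemble

variable [NeZero n] [NeZero d]

lemma mon_linearIndependent (hn : 0 < n) (hd2 : 1 < d) (hqd : q ^ d = 1) (hdvd : d ∣ n) :
    LinearIndependent K (mon n d mu q) := by
  have := (BA n d mu q hn hd2 hqd hdvd).linearIndependent
  rwa [show ⇑(BA n d mu q hn hd2 hqd hdvd) = mon n d mu q from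
    funext fun p => Module.Basis.mk_apply _ _ p] at this

end Assemble

end Main

end Stmt5Aux

/-- the center of `A(n, d, μ, q)` has `K`-basis `{1, g^d, g^{2d}, …, g^{n-d}}`,
i.e. a basis indexed by `Fin (n/d)` whose `i`-th element is `g^(d·i)`. -/
theorem stmt5 {K : Type*} [Field K] [CharZero K] (n d : ℕ) (mu q : K)
    (hn : 0 < n) (hd : 2 ≤ d) (hdvd : d ∣ n)
    (h1 : q ^ d = 1) (h2 : ∀ k : ℕ, 0 < k → k < d → q ^ k ≠ 1) :
    ∃ B : Module.Basis (Fin (n / d)) K (Subalgebra.center K (AAlg K n d mu q)),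
      ∀ i : Fin (n / d), (B i : AAlg K n d mu q) = Agen K n d mu q ^ (d * (i : ℕ)) := by
  haveI : NeZero n := ⟨hn.ne'⟩
  haveI : NeZero d := ⟨by omega⟩
  have hd2 : 1 < d := by omega
  have hdpos : 0 < d := by omega
  set Z := Subalgebra.center K (AAlg K n d mu q) with hZ
  have hdk : ∀ k : Fin (n / d), d * (k : ℕ) < n := by
    intro k
    have h1' : d * (k : ℕ) < d * (n / d) := mul_lt_mul_of_pos_left k.isLt hdpos
    rwa [Nat.mul_div_cancel' hdvd] at h1'
  let F : Fin (n / d) → Z := fun k => ⟨Agen K n d mu q ^ (d * (k : ℕ)), by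
    rw [pow_mul]
    exact pow_mem (Stmt5Aux.Agen_pow_d_central n d mu q h1) _⟩
  have hFli : LinearIndependent K F := by
    apply LinearIndependent.of_comp (Subalgebra.val Z).toLinearMap
    have hcomp : (⇑(Subalgebra.val Z).toLinearMap ∘ F)
        = (Stmt5Aux.mon n d mu q) ∘
          (fun k : Fin (n / d) => (((d * (k : ℕ) : ℕ) : ZMod n), (0 : ZMod d))) := by
      funext k
      show Agen K n d mu q ^ (d * (k : ℕ)) = Stmt5Aux.mon n d mu q _
      rw [Stmt5Aux.mon]
      simp only [ZMod.val_zero, pow_zero, mul_one, ZMod.val_cast_of_lt (hdk k)]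
    rw [hcomp]
    refine (Stmt5Aux.mon_linearIndependent n d mu q hn hd2 h1 hdvd).comp _ ?_
    intro a b h
    simp only [Prod.mk.injEq] at h
    have hv := congrArg ZMod.val h.1
    rw [ZMod.val_cast_of_lt (hdk a), ZMod.val_cast_of_lt (hdk b)] at hv
    exact Fin.ext (Nat.eq_of_mul_eq_mul_left hdpos hv)
  have hspan : ⊤ ≤ Submodule.span K (Set.range F) := by
    rintro ⟨z, hzmem⟩ _
    have h1' := Stmt5Aux.central_mem_span n d mu q hn hd2 h1 hdvd h2 hzmem
    have himg : Set.range (fun k : Fin (n / d) => Agen K n d mu q ^ (d * (k : ℕ)))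
        = ⇑(Subalgebra.val Z).toLinearMap '' Set.range F := by
      rw [← Set.range_comp]
      rfl
    rw [himg, ← Submodule.map_span] at h1'
    obtain ⟨w, hw, hwz⟩ := Submodule.mem_map.mp h1'
    have hwe : w = ⟨z, hzmem⟩ := Subtype.ext hwz
    rwa [← hwe]
  refine ⟨Module.Basis.mk hFli hspan, fun i => ?_⟩
  rw [Module.Basis.mk_apply]
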